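/- Let N' < 0, let μ, ν be Borel probability measures on a complete separable metric space X, and let B_n be a sequence of Borel sets with ν(B_n) > 0 for all n and ν(B_n) → 1. Then the conditioned measures ν_{B_n} converge to ν weakly, and S_{N',μ}(ν_{B_n}) → S_{N',μ}(ν) as n → ∞, where the convergence of entropies is in the extended sense in [1,∞]. -/

import Mathlib

/-- A bundled mm-space: a complete separable metric space with a Borel probability measure. -/
structure MMSpace where
  X : Type
  [metric : MetricSpace X]
  [cpl : CompleteSpace X]
  [sep : TopologicalSpace.SeparableSpace X]
  [mble : MeasurableSpace X]
  [borel : BorelSpace X]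
  μ : MeasureTheory.Measure X
  [prob : MeasureTheory.IsProbabilityMeasure μ]

attribute [instance] MMSpace.metric MMSpace.cpl MMSpace.sep MMSpace.mble MMSpace.borel MMSpace.prob

open MeasureTheory ENNReal Filter Topology Set

noncomputable section

/-- A coupling of two measures on `X` is a measure on `X × X` whose marginals are the
given measures. -/
def IsCoupling {X : Type*} [MeasurableSpace X] (π : Measure (X × X)) (μ ν : Measure X) : Prop :=
  π.map Prod.fst = μ ∧ π.map Prod.snd = ν

/-- A measure has finite second moment if `∫ d(x,x₀)² dμ < ∞` for some base point. -/
def HasFiniteSecondMoment {X : Type*} [PseudoMetricSpace X] [MeasurableSpace X]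
    (μ : Measure X) : Prop :=
  ∃ x₀ : X, ∫⁻ x, ENNReal.ofReal (dist x x₀) ^ 2 ∂μ < ∞

/-- The square-root of the quadratic transport cost of a coupling. -/
def cost2 {X : Type*} [PseudoMetricSpace X] [MeasurableSpace X] (π : Measure (X × X)) : ℝ≥0∞ :=
  (∫⁻ p, ENNReal.ofReal (dist p.1 p.2) ^ 2 ∂π) ^ (1 / 2 : ℝ)

/-- The 2-Wasserstein distance (valued in `[0,∞]`). -/
def W2 {X : Type*} [PseudoMetricSpace X] [MeasurableSpace X] (μ ν : Measure X) : ℝ≥0∞ :=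
  ⨅ (π : Measure (X × X)) (_ : IsCoupling π μ ν), cost2 π

/-- A coupling is optimal if it attains the 2-Wasserstein distance. -/
def IsOptimalCoupling {X : Type*} [PseudoMetricSpace X] [MeasurableSpace X]
    (π : Measure (X × X)) (μ ν : Measure X) : Prop :=
  IsCoupling π μ ν ∧ cost2 π = W2 μ ν

open Classical in
/-- The Rényi entropy `S_{N',μ}(ν) = ∫ ρ^{1-1/N'} dμ` if `ν = ρμ ≪ μ`, and `∞` otherwise. -/
def renyiEntropy {X : Type*} [MeasurableSpace X] (N' : ℝ) (μ ν : Measure X) : ℝ≥0∞ :=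
  if ν ≪ μ then ∫⁻ x, (ν.rnDeriv μ x) ^ (1 - 1 / N') ∂μ else ∞

/-- Weak convergence of a sequence of measures: convergence of integrals of all bounded
continuous functions. -/
def WeakConv {X : Type*} [TopologicalSpace X] [MeasurableSpace X]
    (μs : ℕ → Measure X) (μ : Measure X) : Prop :=
  ∀ f : BoundedContinuousFunction X ℝ,
    Tendsto (fun n => ∫ x, f x ∂(μs n)) atTop (𝓝 (∫ x, f x ∂μ))

/-- Tightness of a sequence of measures. -/
def IsTightSeq {X : Type*} [TopologicalSpace X] [MeasurableSpace X]
    (μs : ℕ → Measure X) : Prop :=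
  ∀ ε : ℝ, 0 < ε → ∃ K : Set X, IsCompact K ∧ ∀ n, μs n Kᶜ < ENNReal.ofReal ε

/-- The function `s_κ`, with the convention `s_κ(0) = 1`. -/
def sKappa (κ θ : ℝ) : ℝ :=
  if θ = 0 then 1
  else if 0 < κ then Real.sin (Real.sqrt κ * θ) / (Real.sqrt κ * θ)
  else if κ < 0 then Real.sinh (Real.sqrt (-κ) * θ) / (Real.sqrt (-κ) * θ)
  else 1

/-- `ω_κ = π/√κ` for `κ > 0` and `∞` otherwise. -/
def omegaKappa (κ : ℝ) : ℝ≥0∞ :=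
  if 0 < κ then ENNReal.ofReal (Real.pi / Real.sqrt κ) else ∞

/-- The coefficient `τ_{K,N}^{(t)}(θ)`, valued in `[0,∞]`. -/
def tauCoeff (K N t θ : ℝ) : ℝ≥0∞ :=
  if ENNReal.ofReal θ < omegaKappa (K / (N - 1)) then
    ENNReal.ofReal (t * (sKappa (K / (N - 1)) (t * θ) / sKappa (K / (N - 1)) θ) ^ (1 - 1 / N))
  else ∞

/-- The coefficient `σ_κ^{(t)}(θ)`, valued in `[0,∞]`. -/
def sigmaCoeff (κ t θ : ℝ) : ℝ≥0∞ :=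
  if ENNReal.ofReal θ < omegaKappa κ then
    ENNReal.ofReal (t * sKappa κ (t * θ) / sKappa κ θ)
  else ∞

/-- The curvature-dimension condition `CD(K,N)` for `N < 0`, for a (probability) measure on a
metric space. -/
def IsCDSpace {X : Type*} [MetricSpace X] [MeasurableSpace X] (K N : ℝ) (μX : Measure X) : Prop :=
  ∀ ν₀ ν₁ : Measure X, IsProbabilityMeasure ν₀ → IsProbabilityMeasure ν₁ →
    ν₀ ≪ μX → ν₁ ≪ μX →
    HasFiniteSecondMoment ν₀ → HasFiniteSecondMoment ν₁ →
    renyiEntropy N μX ν₀ < ∞ → renyiEntropy N μX ν₁ < ∞ →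
    ∃ (νt : ℝ → Measure X) (π : Measure (X × X)),
      νt 0 = ν₀ ∧ νt 1 = ν₁ ∧
      (∀ s ∈ Icc (0:ℝ) 1, ∀ t ∈ Icc (0:ℝ) 1,
        W2 (νt s) (νt t) = ENNReal.ofReal |s - t| * W2 ν₀ ν₁) ∧
      IsOptimalCoupling π ν₀ ν₁ ∧
      (∀ t ∈ Icc (0:ℝ) 1, ∀ N' ∈ Ico N (0:ℝ),
        renyiEntropy N' μX ν₀ < ∞ → renyiEntropy N' μX ν₁ < ∞ →
        renyiEntropy N' μX (νt t) ≤
          (∫⁻ p, tauCoeff K N' (1 - t) (dist p.1 p.2) * (ν₀.rnDeriv μX p.1) ^ (-(1 / N')) ∂π)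
          + ∫⁻ p, tauCoeff K N' t (dist p.1 p.2) * (ν₁.rnDeriv μX p.2) ^ (-(1 / N')) ∂π)

/-- The reduced curvature-dimension condition `CD*(K,N)` for `N < 0`. -/
def IsCDStarSpace {X : Type*} [MetricSpace X] [MeasurableSpace X] (K N : ℝ)
    (μX : Measure X) : Prop :=
  ∀ ν₀ ν₁ : Measure X, IsProbabilityMeasure ν₀ → IsProbabilityMeasure ν₁ →
    ν₀ ≪ μX → ν₁ ≪ μX →
    HasFiniteSecondMoment ν₀ → HasFiniteSecondMoment ν₁ →
    renyiEntropy N μX ν₀ < ∞ → renyiEntropy N μX ν₁ < ∞ →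
    ∃ (νt : ℝ → Measure X) (π : Measure (X × X)),
      νt 0 = ν₀ ∧ νt 1 = ν₁ ∧
      (∀ s ∈ Icc (0:ℝ) 1, ∀ t ∈ Icc (0:ℝ) 1,
        W2 (νt s) (νt t) = ENNReal.ofReal |s - t| * W2 ν₀ ν₁) ∧
      IsOptimalCoupling π ν₀ ν₁ ∧
      (∀ t ∈ Icc (0:ℝ) 1, ∀ N' ∈ Ico N (0:ℝ),
        renyiEntropy N' μX ν₀ < ∞ → renyiEntropy N' μX ν₁ < ∞ →
        renyiEntropy N' μX (νt t) ≤
          (∫⁻ p, sigmaCoeff (K / N') (1 - t) (dist p.1 p.2)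
              * (ν₀.rnDeriv μX p.1) ^ (-(1 / N')) ∂π)
          + ∫⁻ p, sigmaCoeff (K / N') t (dist p.1 p.2)
              * (ν₁.rnDeriv μX p.2) ^ (-(1 / N')) ∂π)

/-- The conditioned (normalized restricted) measure `ν_B`. -/
def condProb {X : Type*} [MeasurableSpace X] (ν : Measure X) (B : Set X) : Measure X :=
  (ν B)⁻¹ • ν.restrict B

/-- Inverse hyperbolic cosine, `arcosh x = log (x + √(x²-1))`. -/
def acosh (x : ℝ) : ℝ := Real.log (x + Real.sqrt (x ^ 2 - 1))

/-- A parameter of an mm-space: a Borel map `[0,1) → X` pushing the Lebesgue measure to `μ`. -/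
def IsParameter (A : MMSpace) (φ : ℝ → A.X) : Prop :=
  Measurable φ ∧ Measure.map φ (volume.restrict (Ico (0:ℝ) 1)) = A.μ

/-- The Ky Fan distance between two measurable functions on `[0,1)`. -/
def kyFan (f g : ℝ → ℝ) : ℝ :=
  sInf {ε : ℝ | 0 ≤ ε ∧
    (volume.restrict (Ico (0:ℝ) 1)) {x | ε < |f x - g x|} ≤ ENNReal.ofReal ε}

/-- The pullback of the 1-Lipschitz functions on an mm-space by a parameter. -/
def pullLip (A : MMSpace) (φ : ℝ → A.X) : Set (ℝ → ℝ) :=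
  {h | ∃ f : A.X → ℝ, LipschitzWith 1 f ∧ h = f ∘ φ}

/-- The Hausdorff distance between two sets of functions with respect to the Ky Fan metric. -/
def hausdorffKF (A B : Set (ℝ → ℝ)) : ℝ :=
  max (⨆ f ∈ A, ⨅ g ∈ B, kyFan f g) (⨆ g ∈ B, ⨅ f ∈ A, kyFan f g)

/-- The observable distance between two mm-spaces. -/
def dconc (A B : MMSpace) : ℝ :=
  sInf {r : ℝ | ∃ φ ψ, IsParameter A φ ∧ IsParameter B ψ ∧
    r = hausdorffKF (pullLip A φ) (pullLip B ψ)}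

end

noncomputable section

/-- The smooth approximation `F_a(x) = a⁻¹ log(e^{ax} + e^{-ax})` of `|x|`. -/
def Fa (a x : ℝ) : ℝ := a⁻¹ * Real.log (Real.exp (a * x) + Real.exp (-(a * x)))

/-- A (minimizing, constant-speed) geodesic parametrized by `[0,1]`. -/
def IsGeodOn01 {X : Type*} [PseudoMetricSpace X] (γ : ℝ → X) : Prop :=
  ∀ s ∈ Set.Icc (0:ℝ) 1, ∀ s' ∈ Set.Icc (0:ℝ) 1,
    dist (γ s) (γ s') = |s - s'| * dist (γ 0) (γ 1)

end

section Helpers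
open MeasureTheory Filter Set ENNReal

lemma pointwise_sup_min_rpow (p : ℝ) (hp : 1 ≤ p) (a : ℝ≥0∞) :
    ⨆ M : ℕ, min a (M : ℝ≥0∞) ^ p = a ^ p := by
  have hp0 : (0:ℝ) ≤ p := le_trans zero_le_one hp
  refine le_antisymm (iSup_le fun M => ENNReal.rpow_le_rpow (min_le_left _ _) hp0) ?_
  by_cases ha : a = ∞
  · subst ha
    have h1 : (⨆ M : ℕ, (M : ℝ≥0∞)) ≤ ⨆ M : ℕ, min ∞ (M : ℝ≥0∞) ^ p := by
      refine iSup_mono fun M : ℕ => ?_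
      rw [min_eq_right le_top]
      calc (M : ℝ≥0∞) = (M : ℝ≥0∞) ^ (1:ℝ) := (ENNReal.rpow_one _).symm
        _ ≤ (M : ℝ≥0∞) ^ p := by
            rcases Nat.eq_zero_or_pos M with h | h
            · subst h; simp [ENNReal.zero_rpow_of_pos (lt_of_lt_of_le zero_lt_one hp)]
            · exact ENNReal.rpow_le_rpow_of_exponent_le (by exact_mod_cast h) hp
    refine le_trans ?_ h1
    rw [ENNReal.iSup_natCast]
    exact le_top
  · obtain ⟨M, hM⟩ := ENNReal.exists_nat_gt ha
    refine le_trans ?_ (le_iSup _ M)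
    rw [min_eq_left hM.le]

lemma le_liminf_setLIntegral_rpow {X : Type*} [MeasurableSpace X]
    (μ : Measure X) [IsProbabilityMeasure μ]
    (p : ℝ) (hp : 1 ≤ p) {ρ : X → ℝ≥0∞} (hρ : Measurable ρ)
    (B : ℕ → Set X) (hB : ∀ n, MeasurableSet (B n))
    (he : Tendsto (fun n => ∫⁻ x in (B n)ᶜ, ρ x ∂μ) atTop (nhds 0)) :
    ∫⁻ x, ρ x ^ p ∂μ ≤ liminf (fun n => ∫⁻ x in B n, ρ x ^ p ∂μ) atTop := by
  have hp0 : (0:ℝ) ≤ p := le_trans zero_le_one hp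
  have hmeas : ∀ M : ℕ, Measurable fun x => min (ρ x) (M : ℝ≥0∞) ^ p := fun M =>
    (ENNReal.continuous_rpow_const.measurable).comp (hρ.min measurable_const)
  have hmono : Monotone fun (M : ℕ) (x : X) => min (ρ x) (M : ℝ≥0∞) ^ p := by
    intro M M' h x
    exact ENNReal.rpow_le_rpow (min_le_min le_rfl (by exact_mod_cast h)) hp0
  have hsup : ∫⁻ x, ρ x ^ p ∂μ = ⨆ M : ℕ, ∫⁻ x, min (ρ x) (M : ℝ≥0∞) ^ p ∂μ := by
    rw [← lintegral_iSup hmeas hmono]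
    exact lintegral_congr fun x => (pointwise_sup_min_rpow p hp (ρ x)).symm
  rw [hsup]
  refine iSup_le fun M => ?_
  -- Bound on the complement: min(ρ,M)^p ≤ M^(p-1) * ρ
  have hb : ∀ x, min (ρ x) (M : ℝ≥0∞) ^ p ≤ (M : ℝ≥0∞) ^ (p - 1) * ρ x := by
    intro x
    have : min (ρ x) (M : ℝ≥0∞) ^ p
        = min (ρ x) (M : ℝ≥0∞) ^ (p - 1) * min (ρ x) (M : ℝ≥0∞) ^ (1:ℝ) := by
      rw [← ENNReal.rpow_add_of_nonneg _ _ (by linarith) zero_le_one]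
      norm_num
    rw [this, ENNReal.rpow_one]
    exact mul_le_mul' (ENNReal.rpow_le_rpow (min_le_right _ _) (by linarith))
      (min_le_left _ _)
  set c : ℝ≥0∞ := ∫⁻ x, min (ρ x) (M : ℝ≥0∞) ^ p ∂μ with hc
  have hcne : c ≠ ∞ := by
    have h1 : c ≤ ∫⁻ _, (M : ℝ≥0∞) ^ p ∂μ :=
      lintegral_mono fun x => ENNReal.rpow_le_rpow (min_le_right _ _) hp0
    refine ne_of_lt (lt_of_le_of_lt h1 ?_)
    rw [lintegral_const, measure_univ, mul_one]
    exact ENNReal.rpow_lt_top_of_nonneg hp0 (by simp)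
  set d : ℕ → ℝ≥0∞ := fun n => (M : ℝ≥0∞) ^ (p - 1) * ∫⁻ x in (B n)ᶜ, ρ x ∂μ with hd
  have hdlim : Tendsto d atTop (nhds 0) := by
    have := ENNReal.Tendsto.const_mul (a := (M : ℝ≥0∞) ^ (p-1)) he
      (Or.inr (ENNReal.rpow_ne_top_of_nonneg (by linarith) (by simp)))
    simpa using this
  have hkey : ∀ n, c - d n ≤ ∫⁻ x in B n, ρ x ^ p ∂μ := by
    intro n
    rw [tsub_le_iff_right]
    calc c ≤ (∫⁻ x in B n, min (ρ x) (M : ℝ≥0∞) ^ p ∂μ)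
          + ∫⁻ x in (B n)ᶜ, min (ρ x) (M : ℝ≥0∞) ^ p ∂μ := by
            rw [hc, ← lintegral_add_compl _ (hB n)]
      _ ≤ (∫⁻ x in B n, ρ x ^ p ∂μ) + d n := by
          refine add_le_add (lintegral_mono fun x =>
            ENNReal.rpow_le_rpow (min_le_left _ _) hp0) ?_
          calc ∫⁻ x in (B n)ᶜ, min (ρ x) (M : ℝ≥0∞) ^ p ∂μ
              ≤ ∫⁻ x in (B n)ᶜ, (M : ℝ≥0∞) ^ (p - 1) * ρ x ∂μ := lintegral_mono fun x => hb x
            _ = d n := lintegral_const_mul _ hρ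
  have hlim : Tendsto (fun n => c - d n) atTop (nhds c) := by
    have := ENNReal.Tendsto.sub (tendsto_const_nhds : Tendsto (fun _ : ℕ => c) atTop (nhds c)) hdlim (Or.inl hcne)
    simpa using this
  calc c = liminf (fun n => c - d n) atTop := hlim.liminf_eq.symm
    _ ≤ liminf (fun n => ∫⁻ x in B n, ρ x ^ p ∂μ) atTop :=
        liminf_le_liminf (Eventually.of_forall hkey)

end Helpers

open MeasureTheory Filter Set in
/-- If `ν(Bₙ) → 1` then the conditioned measures `ν_{Bₙ}` converge weakly
to `ν` and their Rényi entropies converge to that of `ν`. -/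
theorem condProb_weak_conv_and_entropy {X : Type*} [MetricSpace X] [CompleteSpace X]
    [TopologicalSpace.SeparableSpace X] [MeasurableSpace X] [BorelSpace X]
    (N' : ℝ) (hN' : N' < 0)
    (μ ν : Measure X) [IsProbabilityMeasure μ] [IsProbabilityMeasure ν]
    (B : ℕ → Set X) (hB : ∀ n, MeasurableSet (B n)) (hpos : ∀ n, 0 < ν (B n))
    (hconv : Tendsto (fun n => ν (B n)) atTop (nhds 1)) :
    WeakConv (fun n => condProb ν (B n)) ν ∧
      Tendsto (fun n => renyiEntropy N' μ (condProb ν (B n))) atTop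
        (nhds (renyiEntropy N' μ ν)) := by
  have hBc : Tendsto (fun n => ν (B n)ᶜ) atTop (nhds 0) := by
    have h : ∀ n, ν (B n)ᶜ = 1 - ν (B n) := fun n => by
      rw [measure_compl (hB n) (measure_ne_top ν _), measure_univ]
    simp_rw [h]
    have := ENNReal.Tendsto.sub
      (tendsto_const_nhds : Tendsto (fun _ : ℕ => (1:ℝ≥0∞)) atTop (nhds 1)) hconv
      (Or.inl one_ne_top)
    simpa using this
  constructor
  · -- Weak convergence
    intro f
    have hint : Integrable (fun x => f x) ν := f.integrable ν
    have h1 : Tendsto (fun n => (ν (B n)).toReal) atTop (nhds 1) := by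
      have := (ENNReal.tendsto_toReal one_ne_top).comp hconv
      simpa [Function.comp_def] using this
    have hcompl : Tendsto (fun n => (ν (B n)ᶜ).toReal) atTop (nhds 0) := by
      have := (ENNReal.tendsto_toReal (by simp : (0:ℝ≥0∞) ≠ ∞)).comp hBc
      simpa [Function.comp_def] using this
    have h2 : Tendsto (fun n => ∫ x in B n, f x ∂ν) atTop (nhds (∫ x, f x ∂ν)) := by
      have hsub : ∀ n, ∫ x, f x ∂ν - ∫ x in B n, f x ∂ν = ∫ x in (B n)ᶜ, f x ∂ν := by
        intro n
        rw [← integral_add_compl (hB n) hint]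
        ring
      have hzero : Tendsto (fun n => ∫ x, f x ∂ν - ∫ x in B n, f x ∂ν) atTop (nhds 0) := by
        refine squeeze_zero_norm (fun n => ?_) (by simpa using hcompl.const_mul ‖f‖)
        rw [hsub n]
        exact norm_setIntegral_le_of_norm_le_const
          (measure_lt_top ν _) (fun x _ => f.norm_coe_le_norm x)
      have := (tendsto_const_nhds : Tendsto (fun _ : ℕ => ∫ x, f x ∂ν) atTop
        (nhds (∫ x, f x ∂ν))).sub hzero
      simpa using this
    have h3 : Tendsto (fun n => ((ν (B n)).toReal)⁻¹ * ∫ x in B n, f x ∂ν) atTop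
        (nhds (∫ x, f x ∂ν)) := by
      have := (h1.inv₀ one_ne_zero).mul h2
      simpa using this
    refine h3.congr fun n => ?_
    simp only [condProb]
    rw [integral_smul_measure, ENNReal.toReal_inv, smul_eq_mul]
  · -- Entropy convergence
    set p : ℝ := 1 - 1 / N' with hpdef
    have hp1 : 1 < p := by
      have : 1 / N' < 0 := div_neg_of_pos_of_neg one_pos hN'
      simp only [hpdef]; linarith
    have hp0 : (0:ℝ) ≤ p := by linarith
    by_cases hac : ν ≪ μ
    · -- absolutely continuous case
      set ρ : X → ℝ≥0∞ := ν.rnDeriv μ with hρdef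
      have hρ : Measurable ρ := Measure.measurable_rnDeriv ν μ
      have hν : μ.withDensity ρ = ν := Measure.withDensity_rnDeriv_eq ν μ hac
      set c : ℕ → ℝ≥0∞ := fun n => (ν (B n))⁻¹ with hcdef
      set I : ℕ → ℝ≥0∞ := fun n => ∫⁻ x in B n, ρ x ^ p ∂μ with hIdef
      have hcond : ∀ n, condProb ν (B n)
          = μ.withDensity (fun x => c n * (B n).indicator ρ x) := by
        intro n
        have hres : ν.restrict (B n) = μ.withDensity ((B n).indicator ρ) := by
          rw [withDensity_indicator (hB n), ← restrict_withDensity (hB n), hν]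
        simp only [condProb]
        rw [hres, ← withDensity_smul _ (hρ.indicator (hB n))]
        rfl
      have hkey : ∀ n, renyiEntropy N' μ (condProb ν (B n)) = c n ^ p * I n := by
        intro n
        have hmeas : Measurable fun x => c n * (B n).indicator ρ x :=
          measurable_const.mul (hρ.indicator (hB n))
        have hacn : condProb ν (B n) ≪ μ := by
          rw [hcond n]; exact withDensity_absolutelyContinuous μ _
        have hrn : (condProb ν (B n)).rnDeriv μ =ᵐ[μ]
            fun x => c n * (B n).indicator ρ x := by
          rw [hcond n]; exact Measure.rnDeriv_withDensity μ hmeas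
        rw [renyiEntropy, if_pos hacn]
        show ∫⁻ x, ((condProb ν (B n)).rnDeriv μ x) ^ (1 - 1/N') ∂μ = c n ^ p * I n
        calc ∫⁻ x, ((condProb ν (B n)).rnDeriv μ x) ^ (1 - 1/N') ∂μ
            = ∫⁻ x, (c n * (B n).indicator ρ x) ^ p ∂μ := by
              refine lintegral_congr_ae (hrn.mono fun x hx => ?_)
              dsimp only
              rw [hx]
          _ = ∫⁻ x, c n ^ p * ((B n).indicator ρ x) ^ p ∂μ := by
              refine lintegral_congr fun x => ?_
              rw [ENNReal.mul_rpow_of_nonneg _ _ hp0]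
          _ = c n ^ p * ∫⁻ x, ((B n).indicator ρ x) ^ p ∂μ := by
              have hm2 : Measurable fun x => ((B n).indicator ρ x) ^ p :=
                (ENNReal.continuous_rpow_const.measurable).comp (hρ.indicator (hB n))
              rw [lintegral_const_mul _ hm2]
          _ = c n ^ p * I n := by
              congr 1
              have hpt : ∀ x, ((B n).indicator ρ x) ^ p
                  = (B n).indicator (fun x => ρ x ^ p) x := by
                intro x
                by_cases hx : x ∈ B n
                · simp [Set.indicator_of_mem hx]
                · simp [Set.indicator_of_notMem hx,
                    ENNReal.zero_rpow_of_pos (by linarith : (0:ℝ) < p)]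
              rw [lintegral_congr hpt, lintegral_indicator (hB n)]
      have htarget : renyiEntropy N' μ ν = ∫⁻ x, ρ x ^ p ∂μ := by
        rw [renyiEntropy, if_pos hac]
      rw [htarget]
      rw [show (fun n => renyiEntropy N' μ (condProb ν (B n)))
        = fun n => c n ^ p * I n from funext hkey]
      -- convergence of the coefficients
      have hc1 : Tendsto c atTop (nhds 1) := by
        have := ENNReal.tendsto_inv_iff.2 hconv
        simpa using this
      have hcp : Tendsto (fun n => c n ^ p) atTop (nhds 1) := by
        have := hc1.ennrpow_const p
        simpa using this
      have hcge : ∀ n, 1 ≤ c n ^ p := by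
        intro n
        have h1 : 1 ≤ c n := by
          rw [hcdef]
          exact ENNReal.one_le_inv.2 prob_le_one
        calc (1:ℝ≥0∞) = 1 ^ p := (ENNReal.one_rpow p).symm
          _ ≤ c n ^ p := ENNReal.rpow_le_rpow h1 hp0
      have he : Tendsto (fun n => ∫⁻ x in (B n)ᶜ, ρ x ∂μ) atTop (nhds 0) := by
        refine tendsto_of_tendsto_of_tendsto_of_le_of_le tendsto_const_nhds hBc
          (fun n => zero_le) (fun n => ?_)
        exact Measure.setLIntegral_rnDeriv_le (B n)ᶜ
      have hliminf : ∫⁻ x, ρ x ^ p ∂μ ≤ liminf (fun n => c n ^ p * I n) atTop := by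
        refine le_trans (le_liminf_setLIntegral_rpow μ p hp1.le hρ B hB he) ?_
        refine liminf_le_liminf (Eventually.of_forall fun n => ?_)
        calc I n = 1 * I n := (one_mul _).symm
          _ ≤ c n ^ p * I n := mul_le_mul_left (hcge n) _
      have hlimsup : limsup (fun n => c n ^ p * I n) atTop ≤ ∫⁻ x, ρ x ^ p ∂μ := by
        by_cases hI : ∫⁻ x, ρ x ^ p ∂μ = ∞
        · rw [hI]; exact le_top
        · have hmul : Tendsto (fun n => c n ^ p * ∫⁻ x, ρ x ^ p ∂μ) atTop
              (nhds (∫⁻ x, ρ x ^ p ∂μ)) := by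
            have := ENNReal.Tendsto.mul_const (b := ∫⁻ x, ρ x ^ p ∂μ) hcp (Or.inl one_ne_zero)
            simpa using this
          rw [← hmul.limsup_eq]
          refine limsup_le_limsup (Eventually.of_forall fun n => ?_)
          exact mul_le_mul_right (setLIntegral_le_lintegral _ _) _
      exact tendsto_of_le_liminf_of_limsup_le hliminf hlimsup
    · -- singular case: entropies are eventually ∞
      have htarget : renyiEntropy N' μ ν = ∞ := by rw [renyiEntropy, if_neg hac]
      rw [htarget]
      set ρ : X → ℝ≥0∞ := ν.rnDeriv μ with hρdef
      set L : ℝ≥0∞ := (μ.withDensity ρ) univ with hLdef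
      have hdecomp : ν = ν.singularPart μ + μ.withDensity ρ :=
        (Measure.haveLebesgueDecomposition_add ν μ)
      have hsne : ν.singularPart μ ≠ 0 := by
        intro h0
        refine hac ?_
        rw [hdecomp, h0, zero_add]
        exact withDensity_absolutelyContinuous μ ρ
      have hL1 : L < 1 := by
        have h1 : (1:ℝ≥0∞) = ν.singularPart μ univ + L := by
          rw [hLdef, ← Measure.add_apply, ← hdecomp, measure_univ]
        have hspos : 0 < ν.singularPart μ univ := Measure.measure_univ_pos.mpr hsne
        rw [h1]
        have hLne : L ≠ ∞ := by
          refine ne_of_lt (lt_of_le_of_lt ?_ one_lt_top)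
          calc L ≤ ν.singularPart μ univ + L := le_add_self
            _ = 1 := h1.symm
        calc L = 0 + L := (zero_add L).symm
          _ < ν.singularPart μ univ + L :=
            ENNReal.add_lt_add_right hLne hspos
      have hev : ∀ᶠ n in atTop, L < ν (B n) := hconv.eventually (lt_mem_nhds hL1)
      refine Tendsto.congr'
        ?_ (tendsto_const_nhds : Tendsto (fun _ : ℕ => (∞:ℝ≥0∞)) atTop (nhds ∞))
      filter_upwards [hev] with n hn
      have hnot : ¬ condProb ν (B n) ≪ μ := by
        intro hacn
        have hres : ν.restrict (B n) ≪ μ := by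
          intro s hs
          have h0 := hacn hs
          rw [condProb, Measure.smul_apply, smul_eq_mul, mul_eq_zero] at h0
          rcases h0 with h | h
          · exact absurd h (ENNReal.inv_ne_zero.mpr (measure_ne_top ν _))
          · exact h
        obtain ⟨t, htm, ht1, ht2⟩ := Measure.mutuallySingular_singularPart ν μ
        have h2 : ν (B n ∩ tᶜ) = 0 := by
          have h0 := hres ht2
          rw [Measure.restrict_apply htm.compl, inter_comm] at h0
          exact h0
        have h3 : ν (B n) ≤ L := by
          calc ν (B n) ≤ ν (B n ∩ t) + ν (B n \ t) := measure_le_inter_add_diff ν _ t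
            _ = ν (B n ∩ t) := by rw [diff_eq, h2, add_zero]
            _ = ν.singularPart μ (B n ∩ t) + μ.withDensity ρ (B n ∩ t) := by
                conv_lhs => rw [hdecomp]
                rw [Measure.add_apply]
            _ ≤ 0 + L := add_le_add (le_trans (measure_mono inter_subset_right) ht1.le)
                (measure_mono (subset_univ _))
            _ = L := zero_add _
        exact absurd h3 (not_le.mpr hn)
      rw [renyiEntropy, if_neg hnot]
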